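/- Strict monotonicity of the limiting transition probability (identification step in the proof of Proposition 3.1): let a, b ∈ ℝ with 0 < a ≤ 1 and 0 < b ≤ 1. For φ ∈ ℝ, define L : ℕ → ℝ → ℝ recursively by L 0 φ = 0 and L (τ+1) φ = (1 − L τ φ) * a * φ + (L τ φ) * (1 − b * (1 − φ)). Then for every φ ∈ [0,1] and every τ, L τ φ ∈ [0,1]; and for every τ ≥ 1, the map φ ↦ L τ φ is strictly increasing on the interval [0,1]. (Consequently the parameter φ = F_{ij}(g,w) is identified from the limiting τ-step transition probability.) -/
import Mathlib


/-- Strict monotonicity of the limiting transition probability (identification step in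
the proof of Proposition 3.1): the recursively defined limiting `τ`-step transition
probability `L τ φ` lies in `[0,1]` for `φ ∈ [0,1]`, and for `τ ≥ 1` it is strictly
increasing in the acceptance probability `φ` on `[0,1]`. -/
theorem limiting_prob_mem_and_strictMono (a b : ℝ)
    (ha : 0 < a ∧ a ≤ 1) (hb : 0 < b ∧ b ≤ 1)
    (L : ℕ → ℝ → ℝ) (hL0 : ∀ φ : ℝ, L 0 φ = 0)
    (hLrec : ∀ (τ : ℕ) (φ : ℝ),
      L (τ + 1) φ = (1 - L τ φ) * a * φ + L τ φ * (1 - b * (1 - φ))) :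
    (∀ τ : ℕ, ∀ φ ∈ Set.Icc (0 : ℝ) 1, L τ φ ∈ Set.Icc (0 : ℝ) 1) ∧
    (∀ τ : ℕ, 1 ≤ τ → StrictMonoOn (L τ) (Set.Icc (0 : ℝ) 1)) := by
  obtain ⟨ha0, ha1⟩ := ha
  obtain ⟨hb0, hb1⟩ := hb
  have hmem : ∀ τ : ℕ, ∀ φ ∈ Set.Icc (0 : ℝ) 1, L τ φ ∈ Set.Icc (0 : ℝ) 1 := by
    intro τ
    induction τ with
    | zero => intro φ _; simp [hL0]
    | succ n ih =>
      intro φ hφ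
      obtain ⟨hφ0, hφ1⟩ := hφ
      obtain ⟨h0, h1⟩ := ih φ ⟨hφ0, hφ1⟩
      rw [hLrec]
      constructor
      · nlinarith [mul_nonneg ha0.le hφ0, mul_nonneg hb0.le (sub_nonneg.2 hφ1),
          mul_nonneg (sub_nonneg.2 h1) (mul_nonneg ha0.le hφ0),
          mul_nonneg h0 (sub_nonneg.2 (by nlinarith : b * (1 - φ) ≤ 1))]
      · nlinarith [mul_nonneg (sub_nonneg.2 h1) (sub_nonneg.2 (by nlinarith : a * φ ≤ 1)),
          mul_nonneg h0 (mul_nonneg hb0.le (sub_nonneg.2 hφ1))]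
  have key : ∀ τ : ℕ, ∀ φ ∈ Set.Icc (0 : ℝ) 1, ∀ ψ ∈ Set.Icc (0 : ℝ) 1, φ < ψ →
      L τ φ ≤ L τ ψ ∧ (1 ≤ τ → L τ φ < L τ ψ) := by
    intro τ
    induction τ with
    | zero => intro φ _ ψ _ _; simp [hL0]
    | succ n ih =>
      intro φ hφ ψ hψ hlt
      obtain ⟨hle, -⟩ := ih φ hφ ψ hψ hlt
      obtain ⟨hp0, hp1⟩ := hmem n φ hφ
      obtain ⟨hq0, hq1⟩ := hmem n ψ hψ
      obtain ⟨hφ0, hφ1⟩ := hφ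
      obtain ⟨hψ0, hψ1⟩ := hψ
      have h1 : 0 ≤ 1 - (a * ψ + b * (1 - ψ)) := by
        nlinarith [mul_nonneg ha0.le hψ0, mul_nonneg hb0.le (sub_nonneg.2 hψ1)]
      have h2 : 0 < (1 - L n φ) * a + L n φ * b := by
        nlinarith [mul_nonneg (mul_nonneg (sub_nonneg.2 hp1) ha0.le) (sub_nonneg.2 hb1),
          mul_nonneg (mul_nonneg hp0 hb0.le) (sub_nonneg.2 ha1),
          mul_pos ha0 hb0]
      have hstrict : L (n + 1) φ < L (n + 1) ψ := by
        rw [hLrec, hLrec]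
        nlinarith [mul_nonneg (sub_nonneg.2 hle) h1, mul_pos (sub_pos.2 hlt) h2]
      exact ⟨hstrict.le, fun _ => hstrict⟩
  refine ⟨hmem, fun τ hτ φ hφ ψ hψ hlt => (key τ φ hφ ψ hψ hlt).2 hτ⟩
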